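/- For the eight-state (mixed-state) discrimination game with Bloch vectors (d₀ ± d_wm, ±d_wp, ±d_ww), any POVM satisfies ((2P_WW − 1)/d_ww)² + ((2P_WP − 1)/d_wp)² + ((2P_WM − 1)/d_wm)² ≤ 1. -/

import Mathlib

set_option maxHeartbeats 1000000


open Finset

/-- For the eight-state (mixed-state) discrimination game, any POVM satisfies
((2P_WW-1)/d_ww)^2 + ((2P_WP-1)/d_wp)^2 + ((2P_WM-1)/d_wm)^2 <= 1. -/
theorem stmt10 {ι : Type*} [Fintype ι] (μ x y z : ι → ℝ)
    (dww dwp dwm d₀ PWW PWP PWM : ℝ)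
    (hμ : ∀ j, 0 ≤ μ j) (hunit : ∀ j, Real.sqrt (x j ^ 2 + y j ^ 2 + z j ^ 2) = 1)
    (hsum : ∑ j, μ j = 2)
    (hx : ∑ j, μ j * x j = 0) (hy : ∑ j, μ j * y j = 0) (hz : ∑ j, μ j * z j = 0)
    (hdww : 0 < dww) (hdwp : 0 < dwp) (hdwm : 0 < dwm)
    (hball : dww ^ 2 + dwp ^ 2 + dwm ^ 2 ≤ 1)
    (hd₀ : d₀ = Real.sqrt (1 - dww ^ 2 - dwp ^ 2) - dwm)
    (hPWW : PWW = (1 / 2) * (1 + dww * ∑ j, (μ j / 2) * |z j|))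
    (hPWP : PWP = (1 / 2) * (1 + dwp * ∑ j, (μ j / 2) * |y j|))
    (hPWM : PWM = (1 / 2) * (1 + dwm * ∑ j, (μ j / 2) * |x j|)) :
    ((2 * PWW - 1) / dww) ^ 2 + ((2 * PWP - 1) / dwp) ^ 2
      + ((2 * PWM - 1) / dwm) ^ 2 ≤ 1 := by
  have hA : ∀ j, x j ^ 2 + y j ^ 2 + z j ^ 2 = 1 := by
    intro j
    have h0 : (0:ℝ) ≤ x j ^ 2 + y j ^ 2 + z j ^ 2 := by positivity
    have h1 := hunit j
    nlinarith [Real.sq_sqrt h0]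
  have hdot : ∀ i j : ι, |x i| * |x j| + |y i| * |y j| + |z i| * |z j| ≤ 1 := by
    intro i j
    have hi := hA i
    have hj := hA j
    have hi' : |x i| ^ 2 + |y i| ^ 2 + |z i| ^ 2 = 1 := by
      rw [sq_abs, sq_abs, sq_abs]; exact hi
    have hj' : |x j| ^ 2 + |y j| ^ 2 + |z j| ^ 2 = 1 := by
      rw [sq_abs, sq_abs, sq_abs]; exact hj
    nlinarith [sq_nonneg (|x i| * |y j| - |x j| * |y i|),
      sq_nonneg (|x i| * |z j| - |x j| * |z i|),
      sq_nonneg (|y i| * |z j| - |y j| * |z i|),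
      mul_nonneg (abs_nonneg (x i)) (abs_nonneg (x j)),
      mul_nonneg (abs_nonneg (y i)) (abs_nonneg (y j)),
      mul_nonneg (abs_nonneg (z i)) (abs_nonneg (z j)),
      sq_nonneg (|x i| * |x j| + |y i| * |y j| + |z i| * |z j|)]
  set w : ι → ℝ := fun j => μ j / 2 with hw
  have hwn : ∀ j, 0 ≤ w j := fun j => by have := hμ j; simp [hw]; linarith
  have hws : ∑ j, w j = 1 := by
    simp only [hw, ← Finset.sum_div, hsum]; norm_num
  have key : (∑ j, w j * |x j|) ^ 2 + (∑ j, w j * |y j|) ^ 2 + (∑ j, w j * |z j|) ^ 2 ≤ 1 := by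
    have h1 : (∑ j, w j * |x j|) ^ 2 + (∑ j, w j * |y j|) ^ 2 + (∑ j, w j * |z j|) ^ 2
        = ∑ i, ∑ j, (w i * w j) * (|x i| * |x j| + |y i| * |y j| + |z i| * |z j|) := by
      rw [sq, sq, sq, Finset.sum_mul_sum, Finset.sum_mul_sum, Finset.sum_mul_sum,
        ← Finset.sum_add_distrib, ← Finset.sum_add_distrib]
      refine Finset.sum_congr rfl fun i _ => ?_
      rw [← Finset.sum_add_distrib, ← Finset.sum_add_distrib]
      exact Finset.sum_congr rfl fun j _ => by ring
    have h2 : ∑ i, ∑ j, (w i * w j) * (|x i| * |x j| + |y i| * |y j| + |z i| * |z j|)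
        ≤ ∑ i : ι, ∑ j : ι, w i * w j := by
      refine Finset.sum_le_sum fun i _ => Finset.sum_le_sum fun j _ => ?_
      have := hdot i j
      nlinarith [mul_nonneg (hwn i) (hwn j)]
    have h3 : ∑ i : ι, ∑ j : ι, w i * w j = 1 := by
      rw [← Finset.sum_mul_sum, hws]; norm_num
    linarith [h1 ▸ h2, h3 ▸ h2]
  have e1 : (2 * PWW - 1) / dww = ∑ j, w j * |z j| := by
    rw [hPWW]; field_simp; rw [add_sub_cancel_left]; congr 1; exact Finset.sum_congr rfl fun j _ => by simp only [hw]; ring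
  have e2 : (2 * PWP - 1) / dwp = ∑ j, w j * |y j| := by
    rw [hPWP]; field_simp; rw [add_sub_cancel_left]; congr 1; exact Finset.sum_congr rfl fun j _ => by simp only [hw]; ring
  have e3 : (2 * PWM - 1) / dwm = ∑ j, w j * |x j| := by
    rw [hPWM]; field_simp; rw [add_sub_cancel_left]; congr 1; exact Finset.sum_congr rfl fun j _ => by simp only [hw]; ring
  rw [e1, e2, e3]
  linarith
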